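/- The structure-preserving SSNF transformation is satisfiability-preserving: for every FOSL formula φ, φ is satisfiable if and only if L_φ ∧ φ⁺ is satisfiable, where L_φ is a fresh predicate applied to the free variables of φ and φ⁺ is the conjunction of definitional implications (L_{ψ∧ξ} → L_ψ ∧ L_ξ, L_{ψ∨ξ} → L_ψ ∨ L_ξ, L_{∀xψ} → ∀x L_ψ, L_{∃xψ} → ∃x L_ψ, L_{□_e ψ} → □_e L_ψ, L_{◇_e ψ} → ◇_e L_ψ, with polarity-flipped converse implications for negative occurrences) for all subformulas of φ. -/

import Mathlib

namespace FOSL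

/-- Standpoint expressions: e ::= * | s | e∪e | e∩e | e∖e -/
inductive SE (S : Type) : Type
  | star : SE S
  | sym : S → SE S
  | union : SE S → SE S → SE S
  | inter : SE S → SE S → SE S
  | diff : SE S → SE S → SE S

/-- FOSL formulas over predicates `P` (with arities `ar`), constants `C`,
standpoint symbols `S`; variables are natural numbers. -/
inductive Fm (P : Type) (ar : P → ℕ) (C : Type) (S : Type) : Type
  | atom : (p : P) → (Fin (ar p) → C ⊕ ℕ) → Fm P ar C S
  | eq : (C ⊕ ℕ) → (C ⊕ ℕ) → Fm P ar C S
  | neg : Fm P ar C S → Fm P ar C S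
  | conj : Fm P ar C S → Fm P ar C S → Fm P ar C S
  | all : ℕ → Fm P ar C S → Fm P ar C S
  | box : SE S → Fm P ar C S → Fm P ar C S

variable {P : Type} {ar : P → ℕ} {C S : Type}

def Fm.disj (φ ψ : Fm P ar C S) : Fm P ar C S := .neg (.conj (.neg φ) (.neg ψ))
def Fm.impl (φ ψ : Fm P ar C S) : Fm P ar C S := .neg (.conj φ (.neg ψ))
def Fm.ex (x : ℕ) (φ : Fm P ar C S) : Fm P ar C S := .neg (.all x (.neg φ))
def Fm.dia (e : SE S) (φ : Fm P ar C S) : Fm P ar C S := .neg (.box e (.neg φ))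

/-- First-order standpoint structures (constant domain, rigid constants). -/
structure Model (P : Type) (ar : P → ℕ) (C : Type) (S : Type) : Type 1 where
  Dom : Type
  dom_ne : Nonempty Dom
  Prec : Type
  prec_ne : Nonempty Prec
  σ : S → Set Prec
  interpP : Prec → (p : P) → (Fin (ar p) → Dom) → Prop
  interpC : C → Dom

/-- Homomorphic extension of σ to standpoint expressions, with σ(*) = Π. -/
def Model.σE (M : Model P ar C S) : SE S → Set M.Prec
  | .star => Set.univ
  | .sym s => M.σ s
  | .union e1 e2 => M.σE e1 ∪ M.σE e2
  | .inter e1 e2 => M.σE e1 ∩ M.σE e2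
  | .diff e1 e2 => M.σE e1 \ M.σE e2

def Model.termVal (M : Model P ar C S) (v : ℕ → M.Dom) : C ⊕ ℕ → M.Dom
  | .inl c => M.interpC c
  | .inr x => v x

/-- Satisfaction `M, π, v ⊨ φ`. -/
def Model.sat (M : Model P ar C S) : M.Prec → (ℕ → M.Dom) → Fm P ar C S → Prop
  | π, v, .atom p ts => M.interpP π p fun i => M.termVal v (ts i)
  | _, v, .eq t1 t2 => M.termVal v t1 = M.termVal v t2
  | π, v, .neg φ => ¬ M.sat π v φ
  | π, v, .conj φ ψ => M.sat π v φ ∧ M.sat π v ψ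
  | π, v, .all x φ => ∀ δ : M.Dom, M.sat π (Function.update v x δ) φ
  | _, v, .box e φ => ∀ π' ∈ M.σE e, M.sat π' v φ

/-- `M ⊨ φ`: satisfaction at all precisifications and assignments. -/
def Model.satM (M : Model P ar C S) (φ : Fm P ar C S) : Prop :=
  ∀ (π : M.Prec) (v : ℕ → M.Dom), M.sat π v φ

def tmVars : C ⊕ ℕ → Finset ℕ
  | .inl _ => ∅
  | .inr x => {x}

/-- Free variables. -/
def Fm.fv : Fm P ar C S → Finset ℕ
  | .atom _ ts => Finset.univ.biUnion fun i => tmVars (ts i)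
  | .eq t1 t2 => tmVars t1 ∪ tmVars t2
  | .neg φ => φ.fv
  | .conj φ ψ => φ.fv ∪ ψ.fv
  | .all x φ => φ.fv.erase x
  | .box _ φ => φ.fv

/-- Sentential: in every subformula □_e ψ, ψ has no free variables. -/
def Fm.sentential : Fm P ar C S → Prop
  | .atom _ _ => True
  | .eq _ _ => True
  | .neg φ => φ.sentential
  | .conj φ ψ => φ.sentential ∧ ψ.sentential
  | .all _ φ => φ.sentential
  | .box _ φ => φ.fv = ∅ ∧ φ.sentential

/-- Set of subformulas. -/
def Fm.Sub : Fm P ar C S → Set (Fm P ar C S)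
  | .atom p ts => {.atom p ts}
  | .eq t1 t2 => {.eq t1 t2}
  | .neg φ => insert (.neg φ) φ.Sub
  | .conj φ ψ => insert (.conj φ ψ) (φ.Sub ∪ ψ.Sub)
  | .all x φ => insert (.all x φ) φ.Sub
  | .box e φ => insert (.box e φ) φ.Sub

/-- |φ| = number of subformulas of φ. -/
noncomputable def Fm.size (φ : Fm P ar C S) : ℕ := φ.Sub.ncard

def satisfiable (φ : Fm P ar C S) : Prop := ∃ M : Model P ar C S, M.satM φ

/-- n-satisfiable: has a model with exactly n precisifications. -/
def nsatisfiable (n : ℕ) (φ : Fm P ar C S) : Prop :=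
  ∃ M : Model P ar C S, M.satM φ ∧ Nat.card M.Prec = n

def Fm.boxfree : Fm P ar C S → Prop
  | .atom _ _ => True
  | .eq _ _ => True
  | .neg φ => φ.boxfree
  | .conj φ ψ => φ.boxfree ∧ ψ.boxfree
  | .all _ φ => φ.boxfree
  | .box _ _ => False

/-- Standpoint standard normal form: no nested modalities. -/
def Fm.ssnf : Fm P ar C S → Prop
  | .atom _ _ => True
  | .eq _ _ => True
  | .neg φ => φ.ssnf
  | .conj φ ψ => φ.ssnf ∧ ψ.ssnf
  | .all _ φ => φ.ssnf
  | .box _ φ => φ.boxfree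

/-- Restriction of a standpoint structure to a nonempty subset of precisifications. -/
def Model.restrict (M : Model P ar C S) (Ps : Set M.Prec) (h : Ps.Nonempty) :
    Model P ar C S where
  Dom := M.Dom
  dom_ne := M.dom_ne
  Prec := Ps
  prec_ne := h.to_subtype
  σ := fun s => {π : Ps | (π : M.Prec) ∈ M.σ s}
  interpP := fun π => M.interpP π
  interpC := M.interpC

/-! ### Plain first-order logic -/

inductive FO (Q : Type) (arQ : Q → ℕ) (C : Type) : Type
  | tt
  | atom (q : Q) (ts : Fin (arQ q) → C ⊕ ℕ)
  | eq (t1 t2 : C ⊕ ℕ)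
  | neg (φ : FO Q arQ C)
  | conj (φ ψ : FO Q arQ C)
  | all (x : ℕ) (φ : FO Q arQ C)

variable {Q : Type} {arQ : Q → ℕ}

def FO.impl (φ ψ : FO Q arQ C) : FO Q arQ C := .neg (.conj φ (.neg ψ))

def FO.conjList : List (FO Q arQ C) → FO Q arQ C
  | [] => .tt
  | φ :: l => .conj φ (FO.conjList l)

structure FOModel (Q : Type) (arQ : Q → ℕ) (C : Type) : Type 1 where
  Dom : Type
  dom_ne : Nonempty Dom
  interp : (q : Q) → (Fin (arQ q) → Dom) → Prop
  interpC : C → Dom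

def FOModel.termVal (I : FOModel Q arQ C) (v : ℕ → I.Dom) : C ⊕ ℕ → I.Dom
  | .inl c => I.interpC c
  | .inr x => v x

def FOModel.sat (I : FOModel Q arQ C) : (ℕ → I.Dom) → FO Q arQ C → Prop
  | _, .tt => True
  | v, .atom q ts => I.interp q fun i => I.termVal v (ts i)
  | v, .eq t1 t2 => I.termVal v t1 = I.termVal v t2
  | v, .neg φ => ¬ I.sat v φ
  | v, .conj φ ψ => I.sat v φ ∧ I.sat v ψ
  | v, .all x φ => ∀ δ : I.Dom, I.sat (Function.update v x δ) φ

def FOModel.satM (I : FOModel Q arQ C) (φ : FO Q arQ C) : Prop := ∀ v, I.sat v φ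

def fosatisfiable (φ : FO Q arQ C) : Prop := ∃ I : FOModel Q arQ C, I.satM φ

/-! ### Translation to plain FO -/

/-- Translated vocabulary: a predicate P_π for each P and π, and nullary
predicates s_π (for `some s`) and *_π (for `none`). -/
abbrev TQ (P S Pre : Type) : Type := (P × Pre) ⊕ (Option S × Pre)

def tAr (ar : P → ℕ) {S Pre : Type} : TQ P S Pre → ℕ
  | .inl (p, _) => ar p
  | .inr _ => 0

variable {Pre : Type}

/-- trans_E(π, e). -/
def transE (π : Pre) : SE S → FO (TQ P S Pre) (tAr ar) C
  | .star => .atom (.inr (none, π)) Fin.elim0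
  | .sym s => .atom (.inr (some s, π)) Fin.elim0
  | .union e1 e2 => .neg (.conj (.neg (transE π e1)) (.neg (transE π e2)))
  | .inter e1 e2 => .conj (transE π e1) (transE π e2)
  | .diff e1 e2 => .conj (transE π e1) (.neg (transE π e2))

/-- trans_n(π, φ). -/
noncomputable def transF [Fintype Pre] (π : Pre) : Fm P ar C S → FO (TQ P S Pre) (tAr ar) C
  | .atom p ts => .atom (.inl (p, π)) ts
  | .eq t1 t2 => .eq t1 t2
  | .neg φ => .neg (transF π φ)
  | .conj φ ψ => .conj (transF π φ) (transF π ψ)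
  | .all x φ => .all x (transF π φ)
  | .box e φ =>
      FO.conjList ((Finset.univ.toList).map fun π' : Pre =>
        FO.impl (transE π' e) (transF π' φ))

/-- Trans_n(φ) = ⋀_π trans_n(π, φ) ∧ ⋀_π *_π. -/
noncomputable def TransN [Fintype Pre] (φ : Fm P ar C S) : FO (TQ P S Pre) (tAr ar) C :=
  .conj (FO.conjList ((Finset.univ.toList).map fun π : Pre => transF π φ))
        (FO.conjList ((Finset.univ.toList).map fun π : Pre =>
          FO.atom (.inr (none, π)) Fin.elim0))

/-- The plain first-order structure I_M associated with a standpoint structure M. -/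
def Model.toFO (M : Model P ar C S) : FOModel (TQ P S M.Prec) (tAr ar) C where
  Dom := M.Dom
  dom_ne := M.dom_ne
  interp := fun q => match q with
    | .inl (p, π) => fun args => M.interpP π p args
    | .inr (none, _) => fun _ => True
    | .inr (some s, π) => fun _ => π ∈ M.σ s
  interpC := M.interpC


/-! ### The structure-preserving SSNF transformation -/

/-- Extended predicate vocabulary: original predicates plus a fresh predicate
P_ψ for each formula ψ. -/
abbrev EP (P : Type) (ar : P → ℕ) (C S : Type) : Type := P ⊕ Fm P ar C S

/-- Arity of the extended vocabulary: P_ψ has as arity the number of free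
variables of ψ. -/
def eAr (ar : P → ℕ) : EP P ar C S → ℕ
  | .inl p => ar p
  | .inr ψ => ψ.fv.card

/-- Embedding of formulas into the extended vocabulary. -/
def Fm.lift : Fm P ar C S → Fm (EP P ar C S) (eAr ar) C S
  | .atom p ts => .atom (.inl p) ts
  | .eq t1 t2 => .eq t1 t2
  | .neg φ => .neg φ.lift
  | .conj φ ψ => .conj φ.lift ψ.lift
  | .all x φ => .all x φ.lift
  | .box e φ => .box e φ.lift

/-- The fresh atom P_ψ(x₁,…,x_m) applied to the free variables of ψ. -/
noncomputable def freshAtom (ψ : Fm P ar C S) : Fm (EP P ar C S) (eAr ar) C S :=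
  .atom (.inr ψ) (fun i => Sum.inr ((ψ.fv.sort (· ≤ ·)).get
    (Fin.cast (by simp : ψ.fv.card = (ψ.fv.sort (· ≤ ·)).length) i)))

/-- The label L_ψ: the atom itself for literals, ¬L_ξ for ψ = ¬ξ, and the
fresh atom P_ψ(x₁,…,x_m) otherwise. -/
noncomputable def L : Fm P ar C S → Fm (EP P ar C S) (eAr ar) C S
  | .neg ξ => .neg (L ξ)
  | .atom p ts => .atom (.inl p) ts
  | .eq t1 t2 => .eq t1 t2
  | ψ => freshAtom ψ

/-- A valid formula (verum) in the extended vocabulary. -/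
def verum : Fm (EP P ar C S) (eAr ar) C S := .eq (Sum.inr 0) (Sum.inr 0)

mutual
/-- Positive definitional translation ψ⁺. -/
noncomputable def pos : Fm P ar C S → Fm (EP P ar C S) (eAr ar) C S
  | .atom _ _ => verum
  | .eq _ _ => verum
  | .neg ψ => negt ψ
  | .conj ψ ξ => .conj (Fm.impl (L (.conj ψ ξ)) (.conj (L ψ) (L ξ)))
      (.conj (pos ψ) (pos ξ))
  | .all x ψ => .conj (Fm.impl (L (.all x ψ)) (.all x (L ψ))) (pos ψ)
  | .box e ψ => .conj (Fm.impl (L (.box e ψ)) (.box e (L ψ))) (pos ψ)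

/-- Negative definitional translation ψ⁻. -/
noncomputable def negt : Fm P ar C S → Fm (EP P ar C S) (eAr ar) C S
  | .atom _ _ => verum
  | .eq _ _ => verum
  | .neg ψ => pos ψ
  | .conj ψ ξ => .conj (Fm.impl (.conj (L ψ) (L ξ)) (L (.conj ψ ξ)))
      (.conj (negt ψ) (negt ξ))
  | .all x ψ => .conj (Fm.impl (.all x (L ψ)) (L (.all x ψ))) (negt ψ)
  | .box e ψ => .conj (Fm.impl (.box e (L ψ)) (L (.box e ψ))) (negt ψ)
end

/-! ### Auxiliary lemmas for the equisatisfiability theorem -/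

section Aux

lemma Model.termVal_eq_of_agree (M : Model P ar C S) {v v' : ℕ → M.Dom}
    (t : C ⊕ ℕ) (h : ∀ x ∈ tmVars t, v x = v' x) :
    M.termVal v t = M.termVal v' t := by
  cases t with
  | inl c => rfl
  | inr x => exact h x (by show x ∈ ({x} : Finset ℕ); simp)

/-- Coincidence lemma: satisfaction only depends on free variables. -/
lemma Model.sat_fv_eq (M : Model P ar C S) :
    ∀ (ψ : Fm P ar C S) (π : M.Prec) (v v' : ℕ → M.Dom),
      (∀ x ∈ ψ.fv, v x = v' x) → (M.sat π v ψ ↔ M.sat π v' ψ) := by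
  intro ψ
  induction ψ with
  | atom p ts =>
    intro π v v' h
    have : (fun i => M.termVal v (ts i)) = fun i => M.termVal v' (ts i) := by
      funext i
      refine M.termVal_eq_of_agree (ts i) fun x hx => h x ?_
      simp only [Fm.fv, Finset.mem_biUnion, Finset.mem_univ]
      exact ⟨i, trivial, hx⟩
    simp only [Model.sat, this]
  | eq t1 t2 =>
    intro π v v' h
    have h1 := M.termVal_eq_of_agree t1 fun x hx => h x (by
      simp only [Fm.fv, Finset.mem_union]; exact Or.inl hx)
    have h2 := M.termVal_eq_of_agree t2 fun x hx => h x (by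
      simp only [Fm.fv, Finset.mem_union]; exact Or.inr hx)
    simp only [Model.sat, h1, h2]
  | neg ψ ih =>
    intro π v v' h
    simp only [Model.sat]
    exact not_congr (ih π v v' h)
  | conj ψ ξ ih1 ih2 =>
    intro π v v' h
    simp only [Model.sat]
    exact and_congr
      (ih1 π v v' fun x hx => h x (by simp [Fm.fv]; exact Or.inl hx))
      (ih2 π v v' fun x hx => h x (by simp [Fm.fv]; exact Or.inr hx))
  | all x ψ ih =>
    intro π v v' h
    simp only [Model.sat]
    refine forall_congr' fun δ => ih π _ _ fun y hy => ?_
    rcases eq_or_ne y x with rfl | hne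
    · simp [Function.update]
    · simp only [Function.update, dif_neg hne]
      exact h y (Finset.mem_erase.mpr ⟨hne, hy⟩)
  | box e ψ ih =>
    intro π v v' h
    simp only [Model.sat]
    exact forall₂_congr fun π' _ => ih π' v v' h

/-- The extended model interpreting each fresh predicate `P_ψ` as `ψ`. -/
noncomputable def extendM (M : Model P ar C S) : Model (EP P ar C S) (eAr ar) C S where
  Dom := M.Dom
  dom_ne := M.dom_ne
  Prec := M.Prec
  prec_ne := M.prec_ne
  σ := M.σ
  interpC := M.interpC
  interpP := fun π q => match q with
    | .inl p => fun args => M.interpP π p args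
    | .inr ψ => fun args => ∃ v : ℕ → M.Dom, M.sat π v ψ ∧
        ∀ i : Fin (ψ.fv.card),
          v ((ψ.fv.sort (· ≤ ·)).get
            (Fin.cast (by simp : ψ.fv.card = (ψ.fv.sort (· ≤ ·)).length) i)) = args i

lemma extendM_σE (M : Model P ar C S) (e : SE S) :
    (extendM M).σE e = M.σE e := by
  induction e with
  | star => rfl
  | sym s => rfl
  | union e1 e2 ih1 ih2 => simp only [Model.σE, ih1, ih2]; rfl
  | inter e1 e2 ih1 ih2 => simp only [Model.σE, ih1, ih2]; rfl
  | diff e1 e2 ih1 ih2 => simp only [Model.σE, ih1, ih2]; rfl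

lemma extendM_termVal (M : Model P ar C S) (v : ℕ → M.Dom) (t : C ⊕ ℕ) :
    (extendM M).termVal v t = M.termVal v t := by
  cases t <;> rfl

lemma sat_freshAtom (M : Model P ar C S) (ψ : Fm P ar C S)
    (π : M.Prec) (v : ℕ → M.Dom) :
    (extendM M).sat π v (freshAtom ψ) ↔ M.sat π v ψ := by
  show (∃ v' : ℕ → M.Dom, M.sat π v' ψ ∧
      ∀ i : Fin (ψ.fv.card),
        v' ((ψ.fv.sort (· ≤ ·)).get
          (Fin.cast (by simp : ψ.fv.card = (ψ.fv.sort (· ≤ ·)).length) i))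
        = v ((ψ.fv.sort (· ≤ ·)).get
          (Fin.cast (by simp : ψ.fv.card = (ψ.fv.sort (· ≤ ·)).length) i)))
      ↔ M.sat π v ψ
  constructor
  · rintro ⟨v', hv', hag⟩
    refine (M.sat_fv_eq ψ π v' v ?_).mp hv'
    intro x hx
    have hmem : x ∈ ψ.fv.sort (· ≤ ·) := (Finset.mem_sort _).mpr hx
    obtain ⟨j, hj⟩ := List.mem_iff_get.mp hmem
    have := hag (Fin.cast (by simp) j)
    simp only [List.get_eq_getElem, Fin.coe_cast] at this hj
    rwa [hj] at this
  · intro h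
    exact ⟨v, h, fun i => rfl⟩

lemma sat_L (M : Model P ar C S) :
    ∀ (ψ : Fm P ar C S) (π : M.Prec) (v : ℕ → M.Dom),
      (extendM M).sat π v (L ψ) ↔ M.sat π v ψ := by
  intro ψ
  induction ψ with
  | atom p ts => intro π v; exact Iff.rfl
  | eq t1 t2 => intro π v; exact Iff.rfl
  | neg ψ ih =>
    intro π v
    show ¬ _ ↔ ¬ _
    exact not_congr (ih π v)
  | conj ψ ξ _ _ => intro π v; exact sat_freshAtom M (.conj ψ ξ) π v
  | all x ψ _ => intro π v; exact sat_freshAtom M (.all x ψ) π v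
  | box e ψ _ => intro π v; exact sat_freshAtom M (.box e ψ) π v

lemma sat_impl {P' : Type} {ar' : P' → ℕ} (M : Model P' ar' C S)
    (π : M.Prec) (v : ℕ → M.Dom) (a b : Fm P' ar' C S) :
    M.sat π v (Fm.impl a b) ↔ (M.sat π v a → M.sat π v b) := by
  show ¬ (M.sat π v a ∧ ¬ M.sat π v b) ↔ _
  tauto

lemma sat_verum (M : Model P ar C S) (π : M.Prec) (v : ℕ → M.Dom) :
    (extendM M).sat π v (verum (P := P) (ar := ar) (C := C) (S := S)) := rfl

/-- The extended model satisfies all the definitional implications. -/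
lemma sat_posneg (M : Model P ar C S) :
    ∀ (ψ : Fm P ar C S) (π : M.Prec) (v : ℕ → M.Dom),
      (extendM M).sat π v (pos ψ) ∧ (extendM M).sat π v (negt ψ) := by
  intro ψ
  induction ψ with
  | atom p ts => intro π v; exact ⟨sat_verum M π v, sat_verum M π v⟩
  | eq t1 t2 => intro π v; exact ⟨sat_verum M π v, sat_verum M π v⟩
  | neg ψ ih =>
    intro π v
    exact ⟨(ih π v).2, (ih π v).1⟩
  | conj ψ ξ ih1 ih2 =>
    intro π v
    constructor
    · refine ⟨?_, (ih1 π v).1, (ih2 π v).1⟩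
      refine (sat_impl (extendM M) π v _ _).mpr ?_
      intro h
      have h' := (sat_L M (.conj ψ ξ) π v).mp h
      exact ⟨(sat_L M ψ π v).mpr h'.1, (sat_L M ξ π v).mpr h'.2⟩
    · refine ⟨?_, (ih1 π v).2, (ih2 π v).2⟩
      refine (sat_impl (extendM M) π v _ _).mpr ?_
      intro h
      exact (sat_L M (.conj ψ ξ) π v).mpr
        ⟨(sat_L M ψ π v).mp h.1, (sat_L M ξ π v).mp h.2⟩
  | all x ψ ih =>
    intro π v
    constructor
    · refine ⟨?_, (ih π v).1⟩
      refine (sat_impl (extendM M) π v _ _).mpr ?_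
      intro h δ
      exact (sat_L M ψ π _).mpr ((sat_L M (.all x ψ) π v).mp h δ)
    · refine ⟨?_, (ih π v).2⟩
      refine (sat_impl (extendM M) π v _ _).mpr ?_
      intro h
      exact (sat_L M (.all x ψ) π v).mpr fun δ => (sat_L M ψ π _).mp (h δ)
  | box e ψ ih =>
    intro π v
    constructor
    · refine ⟨?_, (ih π v).1⟩
      refine (sat_impl (extendM M) π v _ _).mpr ?_
      intro h π' hπ'
      rw [extendM_σE] at hπ'
      exact (sat_L M ψ π' v).mpr ((sat_L M (.box e ψ) π v).mp h π' hπ')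
    · refine ⟨?_, (ih π v).2⟩
      refine (sat_impl (extendM M) π v _ _).mpr ?_
      intro h
      refine (sat_L M (.box e ψ) π v).mpr fun π' hπ' => ?_
      exact (sat_L M ψ π' v).mp (h π' (by rw [extendM_σE]; exact hπ'))

/-- Restriction of an extended-vocabulary model to the original vocabulary. -/
def restrictP (N : Model (EP P ar C S) (eAr ar) C S) : Model P ar C S where
  Dom := N.Dom
  dom_ne := N.dom_ne
  Prec := N.Prec
  prec_ne := N.prec_ne
  σ := N.σ
  interpC := N.interpC
  interpP := fun π p args => N.interpP π (.inl p) args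

lemma restrictP_σE (N : Model (EP P ar C S) (eAr ar) C S) (e : SE S) :
    (restrictP N).σE e = N.σE e := by
  induction e with
  | star => rfl
  | sym s => rfl
  | union e1 e2 ih1 ih2 => simp only [Model.σE, ih1, ih2]; rfl
  | inter e1 e2 ih1 ih2 => simp only [Model.σE, ih1, ih2]; rfl
  | diff e1 e2 ih1 ih2 => simp only [Model.σE, ih1, ih2]; rfl

lemma sat_lift (N : Model (EP P ar C S) (eAr ar) C S) :
    ∀ (ψ : Fm P ar C S) (π : N.Prec) (v : ℕ → N.Dom),
      (restrictP N).sat π v ψ ↔ N.sat π v ψ.lift := by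
  intro ψ
  induction ψ with
  | atom p ts => intro π v; exact Iff.rfl
  | eq t1 t2 => intro π v; exact Iff.rfl
  | neg ψ ih =>
    intro π v
    show ¬ _ ↔ ¬ _
    exact not_congr (ih π v)
  | conj ψ ξ ih1 ih2 =>
    intro π v
    show _ ∧ _ ↔ _ ∧ _
    exact and_congr (ih1 π v) (ih2 π v)
  | all x ψ ih =>
    intro π v
    show (∀ δ, _) ↔ (∀ δ, _)
    exact forall_congr' fun δ => ih π _
  | box e ψ ih =>
    intro π v
    show (∀ π' ∈ (restrictP N).σE e, _) ↔ (∀ π' ∈ N.σE e, _)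
    rw [restrictP_σE]
    exact forall₂_congr fun π' _ => ih π' v

/-- Soundness of the definitional implications: truth of `L ψ` (resp. its
negation) together with `ψ⁺` (resp. `ψ⁻`) forces truth (falsity) of `ψ`. -/
lemma backward_main (N : Model (EP P ar C S) (eAr ar) C S) :
    ∀ (ψ : Fm P ar C S) (π : N.Prec) (v : ℕ → N.Dom),
      ((∀ π' v', N.sat π' v' (pos ψ)) →
        N.sat π v (L ψ) → N.sat π v ψ.lift) ∧
      ((∀ π' v', N.sat π' v' (negt ψ)) →
        ¬ N.sat π v (L ψ) → ¬ N.sat π v ψ.lift) := by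
  intro ψ
  induction ψ with
  | atom p ts => intro π v; exact ⟨fun _ h => h, fun _ h => h⟩
  | eq t1 t2 => intro π v; exact ⟨fun _ h => h, fun _ h => h⟩
  | neg ψ ih =>
    intro π v
    constructor
    · intro Hpos h
      show ¬ _
      exact (ih π v).2 Hpos h
    · intro Hneg h
      show ¬ ¬ _
      intro hc
      exact hc ((ih π v).1 Hneg (not_not.mp h))
  | conj ψ ξ ih1 ih2 =>
    intro π v
    constructor
    · intro Hpos h
      obtain ⟨himpl, hp1, hp2⟩ := Hpos π v
      have h' := (sat_impl N π v _ _).mp himpl h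
      exact ⟨(ih1 π v).1 (fun π' v' => (Hpos π' v').2.1) h'.1,
             (ih2 π v).1 (fun π' v' => (Hpos π' v').2.2) h'.2⟩
    · intro Hneg h
      obtain ⟨himpl, hn1, hn2⟩ := Hneg π v
      have h' : ¬ (N.sat π v (L ψ) ∧ N.sat π v (L ξ)) := by
        intro hc
        exact h ((sat_impl N π v _ _).mp himpl hc)
      intro hc
      rcases not_and_or.mp h' with hL | hL
      · exact (ih1 π v).2 (fun π' v' => (Hneg π' v').2.1) hL hc.1
      · exact (ih2 π v).2 (fun π' v' => (Hneg π' v').2.2) hL hc.2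
  | all x ψ ih =>
    intro π v
    constructor
    · intro Hpos h
      obtain ⟨himpl, hp⟩ := Hpos π v
      have h' := (sat_impl N π v _ _).mp himpl h
      intro δ
      exact (ih π _).1 (fun π' v' => (Hpos π' v').2) (h' δ)
    · intro Hneg h
      obtain ⟨himpl, hn⟩ := Hneg π v
      have h' : ¬ N.sat π v (.all x (L ψ)) := by
        intro hc
        exact h ((sat_impl N π v _ _).mp himpl hc)
      have : ∃ δ, ¬ N.sat π (Function.update v x δ) (L ψ) := by
        by_contra hc
        push_neg at hc
        exact h' hc
      obtain ⟨δ, hδ⟩ := this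
      intro hc
      exact (ih π _).2 (fun π' v' => (Hneg π' v').2) hδ (hc δ)
  | box e ψ ih =>
    intro π v
    constructor
    · intro Hpos h
      obtain ⟨himpl, hp⟩ := Hpos π v
      have h' := (sat_impl N π v _ _).mp himpl h
      intro π' hπ'
      exact (ih π' v).1 (fun π'' v'' => (Hpos π'' v'').2) (h' π' hπ')
    · intro Hneg h
      obtain ⟨himpl, hn⟩ := Hneg π v
      have h' : ¬ N.sat π v (.box e (L ψ)) := by
        intro hc
        exact h ((sat_impl N π v _ _).mp himpl hc)
      have : ∃ π' ∈ N.σE e, ¬ N.sat π' v (L ψ) := by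
        by_contra hc
        push_neg at hc
        exact h' hc
      obtain ⟨π', hπ', hLψ⟩ := this
      intro hc
      exact (ih π' v).2 (fun π'' v'' => (Hneg π'' v'').2) hLψ (hc π' hπ')

end Aux

/-- The structure-preserving SSNF transformation is satisfiability-preserving:
φ is satisfiable iff L_φ ∧ φ⁺ is satisfiable. -/
theorem ssnf_transformation_equisatisfiable (P : Type) (ar : P → ℕ) (C S : Type)
    (φ : Fm P ar C S) :
    satisfiable φ ↔ satisfiable (Fm.conj (L φ) (pos φ)) := by
  constructor
  · rintro ⟨M, hM⟩
    refine ⟨extendM M, fun π v => ?_⟩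
    exact ⟨(sat_L M φ π v).mpr (hM π v), (sat_posneg M φ π v).1⟩
  · rintro ⟨N, hN⟩
    refine ⟨restrictP N, fun π v => ?_⟩
    have hL : N.sat π v (L φ) := (hN π v).1
    have Hpos : ∀ π' v', N.sat π' v' (pos φ) := fun π' v' => (hN π' v').2
    exact (sat_lift N φ π v).mpr ((backward_main N φ π v).1 Hpos hL)

end FOSL
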